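/- Let T be a set of L-sentences, each of the form ∀x̄ (ψ₀(x̄) → ψ₁(x̄)) where ψ₀(x̄) and ψ₁(x̄) are existential-positive L-formulas. Let (I, ≤) be an upward directed poset and (Mᵢ, f_{ji}) a cofiltered diagram of finite L-structures over I such that Mᵢ ⊨ T for every i ∈ I. Then the cofiltered limit P = {x ∈ ∏_{i∈I} Mᵢ : f_{ji}(x(j)) = x(i) for all i ≤ j}, with its induced L-structure, satisfies P ⊨ T. In other words, the elementary class Mod(T) is closed under the formation of profinite objects (cofiltered limits of its finite members). -/

import Mathlib

open FirstOrder Language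

universe u v w

namespace CofilteredDiagram

variable {L : FirstOrder.Language.{u, v}} {I : Type w} [PartialOrder I]

/-- For a cofiltered diagram `(Mᵢ, f)` of `L`-structures over `I` (with transition maps
`f i j hij : M j →[L] M i` for `i ≤ j`), a subset `J ⊆ I`, an index `i`, a point
`x ∈ ∏_{j ∈ J} Mⱼ` and `y ∈ Mᵢ`, the set `V_{J,i}(x, y) = {j ∈ J ∩ ↑i : f_{ji}(x j) = y}`. -/
def V (M : I → Type*) [∀ i, L.Structure (M i)] (f : ∀ i j : I, i ≤ j → (M j →[L] M i))
    (J : Set I) (i : I) (x : ∀ j : J, M j) (y : M i) : Set I :=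
  {j : I | ∃ (hj : j ∈ J) (hij : i ≤ j), f i j hij (x ⟨j, hj⟩) = y}

end CofilteredDiagram

open CofilteredDiagram

namespace FirstOrder.Language.BoundedFormula

variable {L : FirstOrder.Language.{u, v}} {α : Type*}

/-- Existential-positive formulas: built from atomic formulas using `⊓`, `⊔` and `∃`. -/
inductive IsExistentialPositive : ∀ {n : ℕ}, L.BoundedFormula α n → Prop
  | equal {n : ℕ} (t₁ t₂ : L.Term (α ⊕ Fin n)) : IsExistentialPositive (t₁.bdEqual t₂)
  | rel {n k : ℕ} (R : L.Relations k) (ts : Fin k → L.Term (α ⊕ Fin n)) :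
      IsExistentialPositive (R.boundedFormula ts)
  | inf {n : ℕ} {φ ψ : L.BoundedFormula α n} :
      IsExistentialPositive φ → IsExistentialPositive ψ → IsExistentialPositive (φ ⊓ ψ)
  | sup {n : ℕ} {φ ψ : L.BoundedFormula α n} :
      IsExistentialPositive φ → IsExistentialPositive ψ → IsExistentialPositive (φ ⊔ ψ)
  | ex {n : ℕ} {φ : L.BoundedFormula α (n + 1)} :
      IsExistentialPositive φ → IsExistentialPositive φ.ex

end FirstOrder.Language.BoundedFormula

namespace CofilteredDiagram

variable {I : Type w}

/-- The componentwise `L`-structure on a product of `L`-structures. -/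
instance piStructure {L : FirstOrder.Language.{u, v}} {ι : Type*} (M : ι → Type*)
    [∀ i, L.Structure (M i)] : L.Structure (∀ i, M i) where
  funMap F x i := Structure.funMap F fun k => x k i
  RelMap R x := ∀ i, Structure.RelMap R fun k => x k i

/-- The thread substructure `P = {x ∈ ∏ᵢ Mᵢ : f_{ji}(x j) = x i for all i ≤ j}`: the cofiltered
limit of the diagram, as an `L`-substructure of the product. -/
def threads {L : FirstOrder.Language.{u, v}} [PartialOrder I] (M : I → Type*)
    [∀ i, L.Structure (M i)] (f : ∀ i j : I, i ≤ j → (M j →[L] M i)) :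
    L.Substructure (∀ i, M i) where
  carrier := {x | ∀ (i j : I) (hij : i ≤ j), f i j hij (x j) = x i}
  fun_mem {n} F x hx := by
    intro i j hij
    show f i j hij (Structure.funMap F fun k => x k j) = Structure.funMap F fun k => x k i
    rw [(f i j hij).map_fun]
    congr 1
    funext k
    exact hx k i j hij

end CofilteredDiagram


section Aux

open FirstOrder Language BoundedFormula CategoryTheory

variable {L : FirstOrder.Language.{u, v}} {α : Type*}

/-- Existential-positive formulas are preserved by homomorphisms. -/
theorem FirstOrder.Language.BoundedFormula.IsExistentialPositive.realize_hom {M N : Type*} [L.Structure M] [L.Structure N]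
    (g : M →[L] N) : ∀ {n : ℕ} {φ : L.BoundedFormula α n}, φ.IsExistentialPositive →
      ∀ {v : α → M} {xs : Fin n → M}, φ.Realize v xs → φ.Realize (g ∘ v) (g ∘ xs) := by
  intro n φ hφ
  induction hφ with
  | equal t₁ t₂ =>
    intro v xs h
    rw [BoundedFormula.realize_bdEqual] at h ⊢
    rw [← Sum.comp_elim, HomClass.realize_term, HomClass.realize_term]
    exact congrArg g h
  | rel R ts =>
    intro v xs h
    rw [BoundedFormula.realize_rel] at h ⊢
    simp only [← Sum.comp_elim, HomClass.realize_term]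
    exact g.map_rel R _ h
  | inf _ _ ih₁ ih₂ =>
    intro v xs h
    rw [BoundedFormula.realize_inf] at h ⊢
    exact ⟨ih₁ h.1, ih₂ h.2⟩
  | sup _ _ ih₁ ih₂ =>
    intro v xs h
    rw [BoundedFormula.realize_sup] at h ⊢
    exact h.elim (fun h => Or.inl (ih₁ h)) (fun h => Or.inr (ih₂ h))
  | ex _ ih =>
    intro v xs h
    rw [BoundedFormula.realize_ex] at h ⊢
    obtain ⟨a, ha⟩ := h
    exact ⟨g a, by rw [← Fin.comp_snoc]; exact ih ha⟩

variable {I : Type w} [PartialOrder I]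

/-- The projection from a product of structures to a component is a homomorphism. -/
def projHom (M : I → Type*) [∀ i, L.Structure (M i)] (i : I) : (∀ j, M j) →[L] M i where
  toFun x := x i
  map_fun' := fun _ _ => rfl
  map_rel' := fun _ _ h => h i

variable (M : I → Type*) [∀ i, L.Structure (M i)]
  (f : ∀ i j : I, i ≤ j → (M j →[L] M i))

/-- The homomorphism from the thread substructure to a component. -/
def threadProj (i : I) : CofilteredDiagram.threads M f →[L] M i :=
  (projHom M i).comp (CofilteredDiagram.threads M f).subtype.toHom

theorem threadProj_comm {i j : I} (hij : i ≤ j) (x : CofilteredDiagram.threads M f) :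
    f i j hij (threadProj M f j x) = threadProj M f i x := x.2 i j hij

theorem term_coord {n : ℕ} (i : I) (xs : Fin n → CofilteredDiagram.threads M f)
    (t : L.Term (Empty ⊕ Fin n)) :
    ((t.realize (Sum.elim (fun a => (a.elim : CofilteredDiagram.threads M f)) xs) :
      CofilteredDiagram.threads M f) : ∀ j, M j) i
      = t.realize (Sum.elim (fun a => a.elim) (fun k => threadProj M f i (xs k))) := by
  have h1 : (⇑(threadProj M f i) ∘ Sum.elim (fun a : Empty => (a.elim : CofilteredDiagram.threads M f)) xs)
      = Sum.elim (fun a => a.elim) (fun k => threadProj M f i (xs k)) := by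
    funext a
    cases a with
    | inl a => exact Empty.elim a
    | inr k => rfl
  have h2 := HomClass.realize_term (threadProj M f i)
    (v := Sum.elim (fun a => (a.elim : CofilteredDiagram.threads M f)) xs) (t := t)
  rw [h1] at h2
  exact h2.symm

theorem realize_empty {N : Type*} [L.Structure N] {n : ℕ} (φ : L.BoundedFormula Empty n)
    (v v' : Empty → N) (xs : Fin n → N) (h : φ.Realize v xs) : φ.Realize v' xs := by
  have hv : v' = v := funext fun a => Empty.elim a
  rw [hv]
  exact h

theorem realize_threads (hdir : ∀ i j : I, ∃ k : I, i ≤ k ∧ j ≤ k) [∀ i, Finite (M i)]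
    (hfid : ∀ (i : I) (h : i ≤ i), f i i h = Hom.id L (M i))
    (hfcomp : ∀ (i j k : I) (hij : i ≤ j) (hjk : j ≤ k),
      (f i j hij).comp (f j k hjk) = f i k (le_trans hij hjk)) :
    ∀ {n : ℕ} {φ : L.BoundedFormula Empty n}, φ.IsExistentialPositive →
      ∀ (xs : Fin n → CofilteredDiagram.threads M f),
      (∀ i : I, φ.Realize (fun a => a.elim) (fun k => threadProj M f i (xs k))) →
      φ.Realize (fun a => (a.elim : CofilteredDiagram.threads M f)) xs := by
  haveI : IsDirected I (· ≤ ·) := ⟨hdir⟩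
  have key : ∀ {n : ℕ} {φ : L.BoundedFormula Empty n}, φ.IsExistentialPositive →
      ∀ (xs : Fin n → CofilteredDiagram.threads M f) {i j : I} (hij : i ≤ j),
      φ.Realize (fun a => a.elim) (fun k => threadProj M f j (xs k)) →
      φ.Realize (fun a => a.elim) (fun k => threadProj M f i (xs k)) := by
    intro n φ hφ xs i j hij h
    have h2 := hφ.realize_hom (f i j hij) h
    have hxs : (⇑(f i j hij) ∘ fun k => threadProj M f j (xs k))
        = fun k => threadProj M f i (xs k) := funext fun k => threadProj_comm M f hij (xs k)
    rw [hxs] at h2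
    exact realize_empty _ _ _ _ h2
  intro n φ hφ
  induction hφ with
  | equal t₁ t₂ =>
    intro xs h
    rw [BoundedFormula.realize_bdEqual]
    apply Subtype.ext
    funext i
    have hi := h i
    rw [BoundedFormula.realize_bdEqual] at hi
    have e₁ := term_coord M f i xs t₁
    have e₂ := term_coord M f i xs t₂
    exact e₁.trans (hi.trans e₂.symm)
  | rel R ts =>
    intro xs h
    rw [BoundedFormula.realize_rel]
    show ∀ i : I, _
    intro i
    have hi := h i
    rw [BoundedFormula.realize_rel] at hi
    convert hi using 2 with k
    exact term_coord M f i xs (ts k)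
  | inf h₁ h₂ ih₁ ih₂ =>
    intro xs h
    rw [BoundedFormula.realize_inf]
    refine ⟨ih₁ xs fun i => ?_, ih₂ xs fun i => ?_⟩ <;>
      · have := h i; rw [BoundedFormula.realize_inf] at this; tauto
  | @sup n φ ψ h₁ h₂ ih₁ ih₂ =>
    intro xs h
    simp only [BoundedFormula.realize_sup] at h ⊢
    by_cases hall : ∀ i : I, φ.Realize (fun a => a.elim) (fun k => threadProj M f i (xs k))
    · exact Or.inl (ih₁ xs hall)
    · push_neg at hall
      obtain ⟨i₀, hi₀⟩ := hall
      refine Or.inr (ih₂ xs fun i => ?_)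
      obtain ⟨k, hik, hi₀k⟩ := hdir i i₀
      rcases h k with hk | hk
      · exact absurd (key h₁ xs hi₀k hk) hi₀
      · exact key h₂ xs hik hk
  | @ex n φ h₁ ih =>
    intro xs h
    simp only [BoundedFormula.realize_ex] at h ⊢
    let W : I → Type _ := fun i =>
      {y : M i // φ.Realize (fun a => a.elim) (Fin.snoc (fun k => threadProj M f i (xs k)) y)}
    have hmap : ∀ {i j : I} (hij : i ≤ j) (y : W j), φ.Realize (fun a => a.elim)
        (Fin.snoc (fun k => threadProj M f i (xs k)) (f i j hij y.1)) := by
      intro i j hij y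
      have h2 := h₁.realize_hom (f i j hij) y.2
      rw [Fin.comp_snoc] at h2
      have hxs : (⇑(f i j hij) ∘ fun k => threadProj M f j (xs k))
          = fun k => threadProj M f i (xs k) := funext fun k => threadProj_comm M f hij (xs k)
      rw [hxs] at h2
      exact realize_empty _ _ _ _ h2
    let F : Iᵒᵖ ⥤ Type _ :=
      { obj := fun i => W i.unop
        map := fun {i j} g => TypeCat.ofHom (fun y => ⟨f j.unop i.unop (leOfHom g.unop) y.1, hmap (leOfHom g.unop) y⟩)
        map_id := by
          intro i
          ext y
          show f i.unop i.unop _ y.1 = y.1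
          rw [hfid]
          rfl
        map_comp := by
          intro i j k g₁ g₂
          ext y
          show f k.unop i.unop _ y.1 = f k.unop j.unop _ (f j.unop i.unop _ y.1)
          rw [← hfcomp k.unop j.unop i.unop (leOfHom g₂.unop) (leOfHom g₁.unop)]
          rfl }
    haveI : ∀ j : Iᵒᵖ, Finite (F.obj j) := fun j => Subtype.finite
    haveI : ∀ j : Iᵒᵖ, Nonempty (F.obj j) := by
      intro j
      obtain ⟨y, hy⟩ := h j.unop
      exact ⟨y, hy⟩
    obtain ⟨s, hs⟩ := nonempty_sections_of_finite_inverse_system F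
    have hthread : ∀ (i j : I) (hij : i ≤ j),
        f i j hij ((s (Opposite.op j)).1) = (s (Opposite.op i)).1 := by
      intro i j hij
      exact congrArg Subtype.val (hs (homOfLE hij).op)
    refine ⟨⟨fun i => (s (Opposite.op i)).1, hthread⟩, ?_⟩
    apply ih
    intro i
    have := (s (Opposite.op i)).2
    convert this using 1
    funext k
    refine Fin.lastCases ?_ (fun m => ?_) k
    · simp only [Fin.snoc_last]; rfl
    · simp only [Fin.snoc_castSucc]

end Aux

/-- Let `T` be a set of `L`-sentences of the form `∀ x̄ (ψ₀(x̄) → ψ₁(x̄))` with `ψ₀, ψ₁`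
existential-positive. If `(Mᵢ, f)` is a cofiltered diagram of finite `L`-structures over an
upward directed poset `I` with `Mᵢ ⊨ T` for all `i`, then the cofiltered limit `P` (the thread
substructure of the product) satisfies `P ⊨ T`: the class `Mod(T)` is closed under the formation
of profinite objects. -/
theorem profinite_models_of_models {L : FirstOrder.Language.{u, v}} {I : Type w}
    [PartialOrder I] [Nonempty I] (hdir : ∀ i j : I, ∃ k : I, i ≤ k ∧ j ≤ k)
    (M : I → Type*) [∀ i, L.Structure (M i)] [∀ i, Finite (M i)]
    (f : ∀ i j : I, i ≤ j → (M j →[L] M i))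
    (hfid : ∀ (i : I) (h : i ≤ i), f i i h = Hom.id L (M i))
    (hfcomp : ∀ (i j k : I) (hij : i ≤ j) (hjk : j ≤ k),
      (f i j hij).comp (f j k hjk) = f i k (le_trans hij hjk))
    (T : Set L.Sentence)
    (hform : ∀ σ ∈ T, ∃ (n : ℕ) (ψ₀ ψ₁ : L.BoundedFormula Empty n),
      ψ₀.IsExistentialPositive ∧ ψ₁.IsExistentialPositive ∧ σ = (ψ₀.imp ψ₁).alls)
    (hM : ∀ i : I, ∀ σ ∈ T, σ.Realize (M i)) :
    ∀ σ ∈ T, σ.Realize (CofilteredDiagram.threads M f) := by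
  haveI : IsDirected I (· ≤ ·) := ⟨hdir⟩
  intro σ hσ
  obtain ⟨n, ψ₀, ψ₁, h₀, h₁, rfl⟩ := hform σ hσ
  refine (BoundedFormula.realize_alls (M := CofilteredDiagram.threads M f)).mpr ?_
  intro xs
  rw [BoundedFormula.realize_imp]
  intro hx
  have hcomp : ∀ i : I, ψ₁.Realize (fun a : Empty => a.elim)
      (fun k => threadProj M f i (xs k)) := by
    intro i
    have h0i := h₀.realize_hom (threadProj M f i) hx
    have hMi := (BoundedFormula.realize_alls (M := M i)).mp (hM i _ hσ)
      (fun k => threadProj M f i (xs k))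
    rw [BoundedFormula.realize_imp] at hMi
    exact realize_empty _ _ _ _ (hMi (realize_empty _ _ _ _ h0i))
  exact realize_empty _ _ _ _ (realize_threads M f hdir hfid hfcomp h₁ xs hcomp)
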